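/- Let a, b ∈ ℝ with a ≠ 0, β > 0, γ the Euler–Mascheroni constant, and (ξ_n)_{n≥0} i.i.d. standard normal. Define x_n as in the iterative scheme: x_0 = 0, l_0 = 0, x_{n+1} = b/a + ξ_n/(2^{l_n}√2 a β), with l_{n+1} ∈ ℤ satisfying 2^{l_{n+1}}|b - a x_{n+1}| ∈ (1/2, 1]. If s > 2β e^{γ/2}, then s^n |x_n - b/a| → +∞ almost surely. -/

import Mathlib

open MeasureTheory ProbabilityTheory Filter Set Real
open scoped NNReal ENNReal

lemma gammaDerivHalf_integral :
    ∫ t in Ioi (0:ℝ), t ^ (-(1/2) : ℝ) * (Real.log t * Real.exp (-t))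
      = -Real.sqrt π * (Real.eulerMascheroniConstant + 2 * Real.log 2) := by
  have h2 : HasDerivAt Complex.GammaIntegral
      (∫ t : ℝ in Ioi 0, (t : ℂ) ^ ((1/2 : ℂ) - 1) * (Real.log t * Real.exp (-t)))
      (1/2 : ℂ) := Complex.hasDerivAt_GammaIntegral (by norm_num)
  have hev : ∀ᶠ z in nhds (1/2 : ℂ), Complex.Gamma z = Complex.GammaIntegral z := by
    have hopen : IsOpen {z : ℂ | 0 < z.re} := isOpen_lt continuous_const Complex.continuous_re
    filter_upwards [hopen.mem_nhds (by norm_num : (0:ℝ) < (1/2 : ℂ).re)] with z hz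
    exact Complex.Gamma_eq_integral hz
  have h2' : HasDerivAt Complex.Gamma
      (∫ t : ℝ in Ioi 0, (t : ℂ) ^ ((1/2 : ℂ) - 1) * (Real.log t * Real.exp (-t)))
      (1/2 : ℂ) := h2.congr_of_eventuallyEq hev
  have h1 := Complex.hasDerivAt_Gamma_one_half
  have key := h2'.unique h1
  have hℝ : (∫ t : ℝ in Ioi 0, (t : ℂ) ^ ((1/2 : ℂ) - 1) * (Real.log t * Real.exp (-t)))
      = ((∫ t in Ioi (0:ℝ), t ^ (-(1/2) : ℝ) * (Real.log t * Real.exp (-t)) : ℝ) : ℂ) := by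
    calc (∫ t : ℝ in Ioi 0, (t : ℂ) ^ ((1/2 : ℂ) - 1) * (Real.log t * Real.exp (-t)))
        = ∫ t : ℝ in Ioi 0,
            ((t ^ (-(1/2) : ℝ) * (Real.log t * Real.exp (-t)) : ℝ) : ℂ) := by
          refine setIntegral_congr_fun measurableSet_Ioi fun t ht => ?_
          have ht' : (0:ℝ) ≤ t := le_of_lt ht
          rw [show ((1:ℂ)/2 - 1) = ((-(1/2) : ℝ) : ℂ) by norm_num,
            ← Complex.ofReal_cpow ht']
          push_cast
          ring
      _ = _ := integral_ofReal
  rw [hℝ] at key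
  have hlog2 : Complex.log 2 = ((Real.log 2 : ℝ) : ℂ) := by
    rw [show (2:ℂ) = ((2:ℝ):ℂ) by norm_num, ← Complex.ofReal_log (by norm_num : (0:ℝ) ≤ 2)]
  rw [hlog2] at key
  exact_mod_cast key

lemma log_abs_le_rpow {x : ℝ} (hx : 0 < x) : |Real.log x| ≤ x + 2 * x ^ (-(1/2) : ℝ) := by
  have hrp : (0:ℝ) ≤ x ^ (-(1/2) : ℝ) := Real.rpow_nonneg hx.le _
  rcases le_or_gt 1 x with h1 | h1
  · rw [abs_of_nonneg (Real.log_nonneg h1)]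
    have := Real.log_le_sub_one_of_pos hx
    linarith
  · rw [abs_of_nonpos (Real.log_nonpos hx.le h1.le)]
    have h2 : Real.log (x ^ (-(1/2) : ℝ)) ≤ x ^ (-(1/2) : ℝ) - 1 :=
      Real.log_le_sub_one_of_pos (Real.rpow_pos_of_pos hx _)
    rw [Real.log_rpow hx] at h2
    linarith

lemma integrableOn_log_mul_exp {c : ℝ} (hc : 0 < c) :
    IntegrableOn (fun x => Real.log x * Real.exp (-c * x ^ 2)) (Ioi (0:ℝ)) := by
  refine Integrable.mono'
    ((integrableOn_rpow_mul_exp_neg_mul_sq hc (s := 1) (by norm_num)).add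
      ((integrableOn_rpow_mul_exp_neg_mul_sq hc (s := -(1/2)) (by norm_num)).const_mul 2))
    ((Real.measurable_log.mul (by measurability)).aestronglyMeasurable) ?_
  rw [ae_restrict_iff' measurableSet_Ioi]
  refine ae_of_all _ fun x hx => ?_
  have hx' : (0:ℝ) < x := hx
  have he : (0:ℝ) < Real.exp (-c * x ^ 2) := Real.exp_pos _
  rw [norm_mul, Real.norm_eq_abs, Real.norm_eq_abs, abs_of_pos he]
  simp only [Pi.add_apply, Real.rpow_one]
  calc |Real.log x| * Real.exp (-c * x ^ 2)
      ≤ (x + 2 * x ^ (-(1/2) : ℝ)) * Real.exp (-c * x ^ 2) := by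
        exact mul_le_mul_of_nonneg_right (log_abs_le_rpow hx') he.le
    _ = x * Real.exp (-c * x ^ 2) + 2 * (x ^ (-(1/2) : ℝ) * Real.exp (-c * x ^ 2)) := by ring

lemma intC : ∫ x in Ioi (0:ℝ), Real.log x * Real.exp (-x ^ 2)
    = -Real.sqrt π * (Real.eulerMascheroniConstant + 2 * Real.log 2) / 4 := by
  have h := integral_comp_rpow_Ioi
    (fun t => t ^ (-(1/2) : ℝ) * (Real.log t * Real.exp (-t))) (p := (2:ℝ)) two_ne_zero
  rw [gammaDerivHalf_integral] at h
  have heq : ∫ x in Ioi (0:ℝ),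
      (|(2:ℝ)| * x ^ ((2:ℝ) - 1)) •
        ((fun t => t ^ (-(1/2) : ℝ) * (Real.log t * Real.exp (-t))) (x ^ (2:ℝ)))
      = ∫ x in Ioi (0:ℝ), 4 * (Real.log x * Real.exp (-x ^ 2)) := by
    refine setIntegral_congr_fun measurableSet_Ioi fun x hx => ?_
    have hx' : (0:ℝ) < x := hx
    have hxne : x ≠ 0 := ne_of_gt hx'
    simp only [smul_eq_mul]
    rw [← Real.rpow_natCast x 2] at *
    rw [Real.log_rpow hx', ← Real.rpow_mul hx'.le]
    norm_num
    rw [Real.rpow_neg_one]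
    have hxi : x * x⁻¹ = 1 := mul_inv_cancel₀ hxne
    calc 2 * x * (x⁻¹ * (2 * Real.log x * Real.exp (-x ^ 2)))
        = (x * x⁻¹) * (4 * (Real.log x * Real.exp (-x ^ 2))) := by ring
      _ = 4 * (Real.log x * Real.exp (-x ^ 2)) := by rw [hxi]; ring
  rw [heq, integral_const_mul] at h
  linarith

lemma integrableOn_exp_neg_sq : IntegrableOn (fun x : ℝ => Real.exp (-x ^ 2)) (Ioi (0:ℝ)) := by
  have := (integrable_exp_neg_mul_sq (b := 1) one_pos).integrableOn (s := Ioi (0:ℝ))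
  simpa using this

lemma intD : ∫ x in Ioi (0:ℝ), Real.log x * Real.exp (-x ^ 2 / 2)
    = -(Real.sqrt 2 * Real.sqrt π * (Real.eulerMascheroniConstant + Real.log 2)) / 4 := by
  have hs2 : (0:ℝ) < Real.sqrt 2 := Real.sqrt_pos.mpr two_pos
  have h := integral_comp_mul_left_Ioi
    (fun x => Real.log x * Real.exp (-x ^ 2 / 2)) 0 hs2
  rw [mul_zero] at h
  have heq : ∫ x in Ioi (0:ℝ),
      (fun x => Real.log x * Real.exp (-x ^ 2 / 2)) (Real.sqrt 2 * x)
      = ∫ x in Ioi (0:ℝ),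
        (Real.log (Real.sqrt 2) * Real.exp (-x ^ 2) + Real.log x * Real.exp (-x ^ 2)) := by
    refine setIntegral_congr_fun measurableSet_Ioi fun x hx => ?_
    have hx' : (0:ℝ) < x := hx
    have hsq : (Real.sqrt 2 * x) ^ 2 = 2 * x ^ 2 := by
      rw [mul_pow, Real.sq_sqrt (by norm_num : (0:ℝ) ≤ 2)]
    simp only
    rw [Real.log_mul (ne_of_gt hs2) (ne_of_gt hx'), hsq]
    ring_nf
  rw [heq, integral_add ((integrableOn_exp_neg_sq.const_mul _))
    ((by simpa using integrableOn_log_mul_exp one_pos : IntegrableOn (fun x : ℝ => Real.log x * Real.exp (-x ^ 2)) (Ioi (0:ℝ)))).integrable,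
    integral_const_mul] at h
  have hg : ∫ x in Ioi (0:ℝ), Real.exp (-x ^ 2) = Real.sqrt π / 2 := by
    have := integral_gaussian_Ioi 1
    simpa using this
  rw [hg, intC, Real.log_sqrt (by norm_num : (0:ℝ) ≤ 2), smul_eq_mul] at h
  have h2 : ∫ x in Ioi (0:ℝ), Real.log x * Real.exp (-x ^ 2 / 2)
      = Real.sqrt 2 * (Real.log 2 / 2 * (Real.sqrt π / 2)
        + -Real.sqrt π * (Real.eulerMascheroniConstant + 2 * Real.log 2) / 4) := by
    beta_reduce at h
    rw [h, ← mul_assoc, mul_inv_cancel₀ (ne_of_gt hs2), one_mul]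
  rw [h2]; ring

lemma integrable_log_abs_mul_exp :
    Integrable (fun x : ℝ => Real.log |x| * Real.exp (-x ^ 2 / 2)) := by
  have hIoi : IntegrableOn (fun x : ℝ => Real.log |x| * Real.exp (-x ^ 2 / 2)) (Ioi (0:ℝ)) := by
    refine ((integrableOn_log_mul_exp (by norm_num : (0:ℝ) < 1/2)).congr_fun
      (fun x hx => ?_) measurableSet_Ioi)
    have hx' : (0:ℝ) < x := hx
    rw [abs_of_pos hx']
    ring_nf
  rw [← integrableOn_univ, ← Iio_union_Ici (a := (0:ℝ)), integrableOn_union,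
    integrableOn_Ici_iff_integrableOn_Ioi]
  refine ⟨?_, hIoi⟩
  rw [← (Measure.measurePreserving_neg (volume : Measure ℝ)).integrableOn_comp_preimage
      (Homeomorph.neg ℝ).measurableEmbedding]
  simp only [Function.comp_def, neg_preimage, neg_Iio, neg_zero, abs_neg, neg_sq]
  exact hIoi

lemma gaussian_pdf_eq (x : ℝ) :
    gaussianPDFReal 0 1 x = (Real.sqrt (2 * π))⁻¹ * Real.exp (-x ^ 2 / 2) := by
  simp [gaussianPDFReal]

lemma integrable_log_abs_gaussian :
    Integrable (fun x => Real.log |x|) (gaussianReal 0 1) := by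
  rw [gaussianReal_of_var_ne_zero 0 one_ne_zero,
    integrable_withDensity_iff (measurable_gaussianPDF _ _)
      (ae_of_all _ fun x => ENNReal.ofReal_lt_top)]
  have := integrable_log_abs_mul_exp.const_mul (Real.sqrt (2 * π))⁻¹
  refine this.congr (ae_of_all _ fun x => ?_)
  beta_reduce
  rw [gaussianPDF_def, ENNReal.toReal_ofReal (gaussianPDFReal_nonneg _ _ _), gaussian_pdf_eq]
  ring

lemma integral_log_abs_gaussian :
    ∫ x, Real.log |x| ∂(gaussianReal 0 1)
      = -(Real.eulerMascheroniConstant + Real.log 2) / 2 := by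
  rw [gaussianReal_of_var_ne_zero 0 one_ne_zero]
  have hrw : (gaussianPDF 0 1) = fun x => ((Real.toNNReal (gaussianPDFReal 0 1 x) : ℝ≥0) : ℝ≥0∞) :=
    rfl
  rw [hrw, integral_withDensity_eq_integral_smul
    ((measurable_gaussianPDFReal 0 1).real_toNNReal) (fun x => Real.log |x|)]
  have h1 : (∫ x : ℝ, (Real.toNNReal (gaussianPDFReal 0 1 x) : ℝ≥0) • Real.log |x|)
      = (Real.sqrt (2 * π))⁻¹ * ∫ x : ℝ, Real.log |x| * Real.exp (-x ^ 2 / 2) := by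
    rw [← integral_const_mul]
    congr 1
    funext x
    rw [NNReal.smul_def, smul_eq_mul, Real.coe_toNNReal _ (gaussianPDFReal_nonneg _ _ _),
      gaussian_pdf_eq]
    ring
  have h2 : (∫ x : ℝ, Real.log |x| * Real.exp (-x ^ 2 / 2))
      = 2 * ∫ x in Ioi (0:ℝ), Real.log x * Real.exp (-x ^ 2 / 2) := by
    rw [← integral_comp_abs (f := fun y => Real.log y * Real.exp (-y ^ 2 / 2))]
    congr 1
    funext x
    rw [sq_abs]
  rw [h1, h2, intD]
  have hs2 : (0:ℝ) < Real.sqrt 2 := Real.sqrt_pos.mpr two_pos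
  have hsπ : (0:ℝ) < Real.sqrt π := Real.sqrt_pos.mpr pi_pos
  rw [Real.sqrt_mul (by norm_num : (0:ℝ) ≤ 2) π]
  field_simp
  ring

/-- Upper bound on the convergence rate of the iterative algorithm:
if `s > 2β e^{γ/2}`, then `s^n |x_n - b/a| → +∞` almost surely. -/
theorem iterative_scheme_divergence_rate
    {Ω : Type*} [MeasureSpace Ω] [IsProbabilityMeasure (ℙ : Measure Ω)]
    (a b β s : ℝ) (ha : a ≠ 0) (hβ : 0 < β)
    (ξ : ℕ → Ω → ℝ) (hmeas : ∀ n, Measurable (ξ n))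
    (hindep : iIndepFun ξ ℙ)
    (hgauss : ∀ n, Measure.map (ξ n) ℙ = gaussianReal 0 1)
    (x : ℕ → Ω → ℝ) (l : ℕ → Ω → ℤ)
    (hx0 : ∀ ω, x 0 ω = 0) (hl0 : ∀ ω, l 0 ω = 0)
    (hx : ∀ n ω, x (n + 1) ω = b / a + ξ n ω / ((2 : ℝ) ^ (l n ω) * Real.sqrt 2 * a * β))
    (hl : ∀ n ω, b - a * x (n + 1) ω ≠ 0 →
      (2 : ℝ) ^ (l (n + 1) ω) * |b - a * x (n + 1) ω| ∈ Set.Ioc (1 / 2 : ℝ) 1)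
    (hs : 2 * β * Real.exp (Real.eulerMascheroniConstant / 2) < s) :
    ∀ᵐ ω ∂ℙ, Tendsto (fun n => s ^ n * |x n ω - b / a|) atTop Filter.atTop := by
  have hs0 : (0:ℝ) < s :=
    lt_trans (by positivity) hs
  have gm : Measurable fun x : ℝ => Real.log |x| := Real.measurable_log.comp measurable_abs
  set γE := Real.eulerMascheroniConstant with hγE
  set m : ℝ := -(γE + Real.log 2) / 2 with hm
  set Y : ℕ → Ω → ℝ := fun i ω => Real.log |ξ i ω| with hYdef
  have hident : ∀ i, IdentDistrib (Y i) (Y 0) ℙ ℙ := fun i =>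
    IdentDistrib.comp ⟨(hmeas i).aemeasurable, (hmeas 0).aemeasurable,
      by rw [hgauss i, hgauss 0]⟩ gm
  have hpind : Pairwise (Function.onFun (IndepFun · · ℙ) Y) := fun i j hij =>
    (hindep.indepFun hij).comp gm gm
  have hint : Integrable (Y 0) ℙ := by
    have h0 : Integrable (fun x => Real.log |x|) (Measure.map (ξ 0) ℙ) := by
      rw [hgauss 0]; exact integrable_log_abs_gaussian
    exact (integrable_map_measure gm.aestronglyMeasurable (hmeas 0).aemeasurable).mp h0
  have hmean : ℙ[Y 0] = m := by
    have h0 : ∫ ω, Y 0 ω ∂ℙ = ∫ x', Real.log |x'| ∂(Measure.map (ξ 0) ℙ) :=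
      (integral_map (hmeas 0).aemeasurable gm.aestronglyMeasurable).symm
    rw [h0, hgauss 0, integral_log_abs_gaussian]
  have hslln := strong_law_ae_real Y hint hpind hident
  rw [hmean] at hslln
  have hne : ∀ᵐ ω ∂ℙ, ∀ n, ξ n ω ≠ 0 := by
    rw [ae_all_iff]
    intro n
    rw [ae_iff]
    simp only [not_not]
    have hmap : Measure.map (ξ n) ℙ {0} = 0 := by
      rw [hgauss n]
      exact gaussianReal_absolutelyContinuous 0 one_ne_zero (measure_singleton 0)
    rw [Measure.map_apply (hmeas n) (measurableSet_singleton 0)] at hmap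
    exact hmap
  filter_upwards [hslln, hne] with ω hT hξ
  -- deterministic part
  set c : ℝ := Real.sqrt 2 * β with hcdef
  have hs2 : (0:ℝ) < Real.sqrt 2 := Real.sqrt_pos.mpr two_pos
  have hc : 0 < c := by positivity
  have ha' : (0:ℝ) < |a| := abs_pos.mpr ha
  have hξk : ∀ k, (0:ℝ) < |ξ k ω| := fun k => abs_pos.mpr (hξ k)
  have hDpos : ∀ n, (0:ℝ) < (2:ℝ) ^ (l n ω) := fun n => zpow_pos (by norm_num) _
  have habs : ∀ n, |x (n + 1) ω - b / a|
      = |ξ n ω| / ((2:ℝ) ^ (l n ω) * (Real.sqrt 2 * |a| * β)) := by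
    intro n
    rw [hx n ω, add_sub_cancel_left, abs_div, abs_mul, abs_mul, abs_mul,
      abs_of_pos (hDpos n), abs_of_pos hs2, abs_of_pos hβ]
    ring_nf
  have hne' : ∀ n, x (n + 1) ω - b / a ≠ 0 := by
    intro n
    have : (0:ℝ) < |x (n + 1) ω - b / a| := by
      rw [habs n]
      exact div_pos (hξk n) (by positivity)
    exact abs_ne_zero.mp (ne_of_gt this)
  have habs2 : ∀ z : ℝ, |b - a * z| = |a| * |z - b / a| := by
    intro z
    rw [show b - a * z = -(a * (z - b / a)) by field_simp; ring, abs_neg, abs_mul]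
  have key : ∀ n, (∏ k ∈ Finset.range (n + 1), (|ξ k ω| / c)) / |a|
      ≤ |x (n + 1) ω - b / a| := by
    intro n
    induction n with
    | zero =>
      rw [Finset.prod_range_one, habs 0, hl0 ω]
      rw [show ((2:ℝ) ^ (0:ℤ)) = 1 by norm_num, one_mul, hcdef]
      rw [div_div, div_le_div_iff₀ (by positivity) (by positivity)]
      ring_nf
      exact le_rfl
    | succ n ih =>
      have hEpos : 0 < |x (n + 1) ω - b / a| := abs_pos.mpr (hne' n)
      have hbne : b - a * x (n + 1) ω ≠ 0 := by
        intro h0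
        have := habs2 (x (n + 1) ω)
        rw [h0, abs_zero] at this
        nlinarith
      have hup := (hl n ω hbne).2
      rw [habs2 (x (n + 1) ω)] at hup
      set D := (2:ℝ) ^ (l (n + 1) ω) with hD
      set E := |x (n + 1) ω - b / a| with hE
      have hD0 : 0 < D := hDpos (n + 1)
      rw [Finset.prod_range_succ]
      rw [habs (n + 1)]
      have step1 : (∏ k ∈ Finset.range (n + 1), (|ξ k ω| / c)) * (|ξ (n + 1) ω| / c) / |a|
          = ((∏ k ∈ Finset.range (n + 1), (|ξ k ω| / c)) / |a|) * (|ξ (n + 1) ω| / c) := by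
        ring
      rw [step1]
      have step2 : ((∏ k ∈ Finset.range (n + 1), (|ξ k ω| / c)) / |a|) * (|ξ (n + 1) ω| / c)
          ≤ E * (|ξ (n + 1) ω| / c) :=
        mul_le_mul_of_nonneg_right ih (by positivity)
      refine le_trans step2 ?_
      have hrw : Real.sqrt 2 * |a| * β = |a| * c := by rw [hcdef]; ring
      rw [hrw, mul_div_assoc', div_le_div_iff₀ (by positivity) (by positivity), ← hD]
      calc E * |ξ (n + 1) ω| * (D * (|a| * c))
          = (D * (|a| * E)) * (|ξ (n + 1) ω| * c) := by ring
        _ ≤ 1 * (|ξ (n + 1) ω| * c) := mul_le_mul_of_nonneg_right hup (by positivity)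
        _ = |ξ (n + 1) ω| * c := one_mul _
  have hlogc : Real.log c = Real.log 2 / 2 + Real.log β := by
    rw [hcdef, Real.log_mul (ne_of_gt hs2) (ne_of_gt hβ), Real.log_sqrt (by norm_num)]
  have hL0 : 0 < Real.log s - Real.log c + m := by
    have hlog : Real.log (2 * β * Real.exp (γE / 2)) < Real.log s :=
      Real.log_lt_log (by positivity) hs
    rw [Real.log_mul (by positivity) (Real.exp_ne_zero _),
      Real.log_mul two_ne_zero (ne_of_gt hβ), Real.log_exp] at hlog
    rw [hm, hlogc]
    linarith
  set d : ℝ := Real.log s - Real.log c with hd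
  have hsum : ∀ n : ℕ, (∑ k ∈ Finset.range n, (Real.log s + Y k ω - Real.log c))
      = (∑ k ∈ Finset.range n, Y k ω) + n * d := by
    intro n
    rw [hd]
    rw [Finset.sum_congr rfl (fun k _ => show Real.log s + Y k ω - Real.log c
      = Y k ω + (Real.log s - Real.log c) by ring)]
    rw [Finset.sum_add_distrib, Finset.sum_const, Finset.card_range, nsmul_eq_mul]
  have havg : Tendsto (fun n : ℕ =>
      (∑ k ∈ Finset.range n, (Real.log s + Y k ω - Real.log c)) / n) atTop (nhds (m + d)) := by
    have h1 : Tendsto (fun n : ℕ => (∑ k ∈ Finset.range n, Y k ω) / n + d)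
        atTop (nhds (m + d)) := hT.add_const d
    refine Tendsto.congr' ?_ h1
    filter_upwards [eventually_ge_atTop 1] with n hn
    have hn0 : (n:ℝ) ≠ 0 := Nat.cast_ne_zero.mpr (by omega)
    rw [hsum n, add_div, mul_div_cancel_left₀ d hn0]
  have hLpos : 0 < m + d := by rw [hd]; linarith
  have hTtop : Tendsto (fun n : ℕ =>
      ∑ k ∈ Finset.range n, (Real.log s + Y k ω - Real.log c)) atTop atTop := by
    have h2 := Filter.Tendsto.atTop_mul_pos hLpos
      (tendsto_natCast_atTop_atTop (R := ℝ)) havg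
    refine Tendsto.congr' ?_ h2
    filter_upwards [eventually_ge_atTop 1] with n hn
    have hn0 : (n:ℝ) ≠ 0 := Nat.cast_ne_zero.mpr (by omega)
    rw [mul_div_cancel₀ _ hn0]
  have hexp : ∀ n : ℕ, Real.exp (∑ k ∈ Finset.range n, (Real.log s + Y k ω - Real.log c))
      = s ^ n * ∏ k ∈ Finset.range n, (|ξ k ω| / c) := by
    intro n
    rw [Real.exp_sum]
    have hterm : ∀ k ∈ Finset.range n,
        Real.exp (Real.log s + Y k ω - Real.log c) = s * (|ξ k ω| / c) := by
      intro k _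
      rw [Real.exp_sub, Real.exp_add, Real.exp_log hs0, Real.exp_log hc,
        show Y k ω = Real.log |ξ k ω| from rfl, Real.exp_log (hξk k), mul_div_assoc]
    rw [Finset.prod_congr rfl hterm, Finset.prod_mul_distrib, Finset.prod_const,
      Finset.card_range]
  refine tendsto_atTop_mono' atTop ?_
    ((Real.tendsto_exp_atTop.comp hTtop).atTop_div_const ha')
  filter_upwards [eventually_ge_atTop 1] with n hn
  obtain ⟨p, rfl⟩ : ∃ p, n = p + 1 := ⟨n - 1, by omega⟩
  calc Real.exp (∑ k ∈ Finset.range (p + 1), (Real.log s + Y k ω - Real.log c)) / |a|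
      = s ^ (p + 1) * ((∏ k ∈ Finset.range (p + 1), (|ξ k ω| / c)) / |a|) := by
        rw [hexp]; ring
    _ ≤ s ^ (p + 1) * |x (p + 1) ω - b / a| :=
        mul_le_mul_of_nonneg_left (key p) (by positivity)
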